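/- Let α ∈ ℝ. As n → ∞, the quantity Δ_n² ∑_{(j,k)} sup_{x ∈ X_{j,k}} ‖x‖^{−α}, where the sum runs over all pairs (j,k) with (2πj/n, 2πk/n) ∈ [−π,π)² \ {0}, is O(n^{α−2}) if α > 2, O(log n) if α = 2, and O(1) if α < 2. -/

import Mathlib

open Real Filter

open scoped Classical

noncomputable section

set_option maxHeartbeats 1000000

/-! ### Auxiliary lemmas -/

lemma coord_upper {u a J : ℝ} (hu : 0 < u) (hl : 2*u*J - u ≤ a) (hr : a ≤ 2*u*J + u) :
    |a| ≤ 2*u*|J| + u := by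
  rcases abs_cases J with ⟨hJ, _⟩ | ⟨hJ, _⟩ <;> rw [hJ] <;>
    exact abs_le.2 ⟨by nlinarith, by nlinarith⟩

lemma coord_lower {u a J : ℝ} (hu : 0 < u) (hJ : 1 ≤ |J|)
    (hl : 2*u*J - u ≤ a) (hr : a ≤ 2*u*J + u) : u * |J| ≤ |a| := by
  rcases abs_cases J with ⟨hJe, hJ0⟩ | ⟨hJe, hJ0⟩
  · rw [hJe] at hJ ⊢
    calc u * J ≤ a := by nlinarith
    _ ≤ |a| := le_abs_self a
  · rw [hJe] at hJ ⊢
    calc u * -J ≤ -a := by nlinarith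
    _ ≤ |a| := neg_le_abs a

lemma abs_le_sqrt_sq_add_sq_left (a b : ℝ) : |a| ≤ Real.sqrt (a^2 + b^2) := by
  rw [← Real.sqrt_sq_eq_abs]
  exact Real.sqrt_le_sqrt (by nlinarith [sq_nonneg b])

lemma abs_le_sqrt_sq_add_sq_right (a b : ℝ) : |b| ≤ Real.sqrt (a^2 + b^2) := by
  rw [← Real.sqrt_sq_eq_abs]
  exact Real.sqrt_le_sqrt (by nlinarith [sq_nonneg a])

lemma sqrt_sq_add_sq_le (a b : ℝ) : Real.sqrt (a^2 + b^2) ≤ |a| + |b| := by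
  have h2 : a^2 + b^2 ≤ (|a| + |b|)^2 := by
    nlinarith [mul_nonneg (abs_nonneg a) (abs_nonneg b), sq_abs a, sq_abs b]
  calc Real.sqrt (a^2+b^2) ≤ Real.sqrt ((|a|+|b|)^2) := Real.sqrt_le_sqrt h2
    _ = |a| + |b| := Real.sqrt_sq (by positivity)

lemma harmonic_le (n : ℕ) : ∑ m ∈ Finset.Icc 1 n, (m:ℝ)⁻¹ ≤ 1 + Real.log n := by
  induction n with
  | zero => simp
  | succ n ih =>
    rw [Finset.sum_Icc_succ_top (Nat.succ_le_succ (Nat.zero_le n))]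
    rcases Nat.eq_zero_or_pos n with rfl | hn
    · norm_num
    · have hn0 : (0:ℝ) < n := by exact_mod_cast hn
      have h1 : Real.log ((n:ℝ)/(n+1)) ≤ (n:ℝ)/(n+1) - 1 :=
        Real.log_le_sub_one_of_pos (by positivity)
      rw [Real.log_div (by positivity) (by positivity)] at h1
      have h2 : (n:ℝ)/(n+1) - 1 = -((n:ℝ)+1)⁻¹ := by field_simp; ring
      have h3 : ((n+1:ℕ):ℝ) = (n:ℝ) + 1 := by push_cast; ring
      rw [h3]
      have h4 : ((n:ℝ)+1)⁻¹ ≤ Real.log ((n:ℝ)+1) - Real.log n := by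
        rw [h2] at h1; linarith
      linarith

lemma sum_rpow_le_pow {β : ℝ} (hβ : 0 < β) (n : ℕ) :
    ∑ m ∈ Finset.Icc 1 n, (m:ℝ)^(β-1) ≤ (1 + β⁻¹) * (n:ℝ)^β := by
  rcases le_or_gt 1 β with hβ1 | hβ1
  · rcases Nat.eq_zero_or_pos n with rfl | hn
    · simp [Real.zero_rpow hβ.ne']
    have hn0 : (0:ℝ) < n := by exact_mod_cast hn
    calc ∑ m ∈ Finset.Icc 1 n, (m:ℝ)^(β-1)
        ≤ ∑ m ∈ Finset.Icc 1 n, (n:ℝ)^(β-1) := by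
          refine Finset.sum_le_sum fun m hm => ?_
          have := (Finset.mem_Icc.1 hm).2
          exact Real.rpow_le_rpow (by positivity) (by exact_mod_cast this) (by linarith)
      _ = n * (n:ℝ)^(β-1) := by
          rw [Finset.sum_const, Nat.card_Icc]; simp [nsmul_eq_mul]
      _ = (n:ℝ)^β := by
          rw [show (n:ℝ) * (n:ℝ)^(β-1) = (n:ℝ)^(1:ℝ) * (n:ℝ)^(β-1) by rw [Real.rpow_one],
            ← Real.rpow_add hn0]; ring_nf
      _ ≤ (1 + β⁻¹) * (n:ℝ)^β := by
          nlinarith [Real.rpow_nonneg (Nat.cast_nonneg n : (0:ℝ) ≤ n) β,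
            inv_nonneg.2 hβ.le]
  · have key : ∀ n : ℕ, ∑ m ∈ Finset.Icc 1 n, (m:ℝ)^(β-1) ≤ β⁻¹ * (n:ℝ)^β := by
      intro n
      induction n with
      | zero => simp [Real.zero_rpow hβ.ne']
      | succ n ih =>
        rw [Finset.sum_Icc_succ_top (Nat.succ_le_succ (Nat.zero_le n))]
        have hpos : (0:ℝ) < (n:ℝ) + 1 := by positivity
        have hs : (-1:ℝ) ≤ -(((n:ℝ)+1)⁻¹) := by
          rw [neg_le_neg_iff]
          exact inv_le_one_of_one_le₀ (by linarith [Nat.cast_nonneg (α := ℝ) n])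
        have hbern := rpow_one_add_le_one_add_mul_self hs hβ.le hβ1.le
        have he : (1 + -(((n:ℝ)+1)⁻¹)) = (n:ℝ)/((n:ℝ)+1) := by field_simp; ring
        rw [he] at hbern
        have hmul : ((n:ℝ)/((n:ℝ)+1))^β * ((n:ℝ)+1)^β = (n:ℝ)^β := by
          rw [← Real.mul_rpow (by positivity) (by positivity)]
          congr 1; field_simp
        have h5 : (n:ℝ)^β ≤ (1 + β * -(((n:ℝ)+1)⁻¹)) * ((n:ℝ)+1)^β := by
          rw [← hmul]
          exact mul_le_mul_of_nonneg_right hbern (by positivity)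
        have h6 : ((n:ℝ)+1)^(β-1) = ((n:ℝ)+1)^β * (((n:ℝ)+1))⁻¹ := by
          rw [Real.rpow_sub hpos, Real.rpow_one, div_eq_mul_inv]
        have h7 : ((n+1:ℕ):ℝ) = (n:ℝ)+1 := by push_cast; ring
        rw [h7, h6]
        have h8 : (1 + β * -(((n:ℝ)+1)⁻¹)) * ((n:ℝ)+1)^β
            = ((n:ℝ)+1)^β - β * (((n:ℝ)+1)^β * ((n:ℝ)+1)⁻¹) := by ring
        rw [h8] at h5
        have hβ0 : (0:ℝ) < β⁻¹ := by positivity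
        have hXeq : β⁻¹ * (((n:ℝ)+1)^β - β * (((n:ℝ)+1)^β * ((n:ℝ)+1)⁻¹))
            = β⁻¹ * ((n:ℝ)+1)^β - ((n:ℝ)+1)^β * ((n:ℝ)+1)⁻¹ := by
          field_simp
        have h9 := (mul_le_mul_of_nonneg_left h5 hβ0.le).trans_eq hXeq
        linarith [ih, h9]
    calc ∑ m ∈ Finset.Icc 1 n, (m:ℝ)^(β-1) ≤ β⁻¹ * (n:ℝ)^β := key n
      _ ≤ (1 + β⁻¹) * (n:ℝ)^β := by
        nlinarith [Real.rpow_nonneg (Nat.cast_nonneg n : (0:ℝ) ≤ n) β]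

lemma sup_bound (α : ℝ) (n : ℕ) (hn : 1 ≤ n) (j k : ℤ) (hjk : (j, k) ≠ (0, 0)) :
    sSup ((fun p : ℝ × ℝ => Real.sqrt (p.1 ^ 2 + p.2 ^ 2) ^ (-α)) ''
      (Set.Icc (2 * π * j / n - π / n) (2 * π * j / n + π / n) ×ˢ
        Set.Icc (2 * π * k / n - π / n) (2 * π * k / n + π / n))) ≤
    (π ^ (-α) + (6*π) ^ (-α)) * (((max |j| |k| : ℤ) : ℝ) / n) ^ (-α) := by
  have hn0 : (0:ℝ) < n := by exact_mod_cast hn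
  have h1 : (1:ℤ) ≤ max |j| |k| := by
    have : j ≠ 0 ∨ k ≠ 0 := by
      by_contra h
      push_neg at h
      exact hjk (by simp [h.1, h.2])
    rcases this with h | h
    · exact le_max_of_le_left (Int.one_le_abs h)
    · exact le_max_of_le_right (Int.one_le_abs h)
  set M : ℝ := ((max |j| |k| : ℤ) : ℝ) with hMdef
  have hMcast : M = max |(j:ℝ)| |(k:ℝ)| := by
    rw [hMdef]; push_cast; rfl
  have hM1 : (1:ℝ) ≤ M := by rw [hMdef]; exact_mod_cast h1
  have hM0 : (0:ℝ) < M := lt_of_lt_of_le one_pos hM1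
  have hMn : (0:ℝ) < M / n := by positivity
  apply Real.sSup_le
  · rintro y ⟨p, hp, rfl⟩
    rw [Set.mem_prod, Set.mem_Icc, Set.mem_Icc] at hp
    obtain ⟨⟨hl1, hr1⟩, hl2, hr2⟩ := hp
    set u : ℝ := π / n with hu
    have hu0 : 0 < u := by positivity
    have e1 : 2 * π * (j:ℝ) / n = 2 * u * (j:ℝ) := by rw [hu]; ring
    have e2 : 2 * π * (k:ℝ) / n = 2 * u * (k:ℝ) := by rw [hu]; ring
    rw [e1] at hl1 hr1
    rw [e2] at hl2 hr2
    have hl1' : 2*u*(j:ℝ) - u ≤ p.1 := by linarith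
    have hr1' : p.1 ≤ 2*u*(j:ℝ) + u := by linarith
    have hl2' : 2*u*(k:ℝ) - u ≤ p.2 := by linarith
    have hr2' : p.2 ≤ 2*u*(k:ℝ) + u := by linarith
    set r : ℝ := Real.sqrt (p.1^2 + p.2^2) with hr
    have hlow : u * M ≤ r := by
      rw [hMcast]
      rcases max_cases |(j:ℝ)| |(k:ℝ)| with ⟨hm, _⟩ | ⟨hm, _⟩
      · rw [hm]
        have hJ1 : 1 ≤ |(j:ℝ)| := by rw [← hm, ← hMcast]; exact hM1
        exact (coord_lower hu0 hJ1 hl1' hr1').trans (abs_le_sqrt_sq_add_sq_left _ _)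
      · rw [hm]
        have hJ1 : 1 ≤ |(k:ℝ)| := by rw [← hm, ← hMcast]; exact hM1
        exact (coord_lower hu0 hJ1 hl2' hr2').trans (abs_le_sqrt_sq_add_sq_right _ _)
    have hhigh : r ≤ 6 * u * M := by
      have u1 := coord_upper hu0 hl1' hr1'
      have u2 := coord_upper hu0 hl2' hr2'
      have hj : |(j:ℝ)| ≤ M := by rw [hMcast]; exact le_max_left _ _
      have hk : |(k:ℝ)| ≤ M := by rw [hMcast]; exact le_max_right _ _
      calc r ≤ |p.1| + |p.2| := sqrt_sq_add_sq_le _ _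
        _ ≤ (2*u*M + u) + (2*u*M + u) := by nlinarith
        _ ≤ 6 * u * M := by nlinarith
    have huM : u * M = π * (M / n) := by rw [hu]; ring
    have h6uM : 6 * u * M = (6 * π) * (M / n) := by rw [hu]; ring
    rcases le_or_gt 0 α with hα | hα
    · have h2 : r ^ (-α) ≤ (π * (M/n)) ^ (-α) := by
        apply Real.rpow_le_rpow_of_nonpos (by positivity)
          (by rw [← huM]; exact hlow) (by linarith)
      have h3 : (π * (M/n)) ^ (-α) = π ^ (-α) * (M/n) ^ (-α) :=
        Real.mul_rpow pi_pos.le hMn.le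
      have h4 : (0:ℝ) ≤ (6*π) ^ (-α) := Real.rpow_nonneg (by positivity) _
      have h5 : (0:ℝ) ≤ (M/n) ^ (-α) := Real.rpow_nonneg hMn.le _
      nlinarith [h2, h3]
    · have h2 : r ^ (-α) ≤ ((6*π) * (M/n)) ^ (-α) := by
        apply Real.rpow_le_rpow (Real.sqrt_nonneg _)
          (by rw [← h6uM]; exact hhigh) (by linarith)
      have h3 : ((6*π) * (M/n)) ^ (-α) = (6*π) ^ (-α) * (M/n) ^ (-α) :=
        Real.mul_rpow (by positivity) hMn.le
      have h4 : (0:ℝ) ≤ π ^ (-α) := Real.rpow_nonneg pi_pos.le _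
      have h5 : (0:ℝ) ≤ (M/n) ^ (-α) := Real.rpow_nonneg hMn.le _
      nlinarith [h2, h3]
  · positivity

lemma fiber_card_le (m : ℕ) (hm : 1 ≤ m) (s : Finset (ℤ×ℤ))
    (hs : ∀ p ∈ s, (max |p.1| |p.2|).toNat = m) : s.card ≤ 8 * m := by
  have hsub : s ⊆ (Finset.Icc (-(m:ℤ)) m ×ˢ Finset.Icc (-(m:ℤ)) m) \
      (Finset.Icc (-(m:ℤ)+1) ((m:ℤ)-1) ×ˢ Finset.Icc (-(m:ℤ)+1) ((m:ℤ)-1)) := by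
    intro p hp
    have hmax := hs p hp
    have h0 : (0:ℤ) ≤ max |p.1| |p.2| := le_trans (abs_nonneg _) (le_max_left _ _)
    have hmax' : max |p.1| |p.2| = (m:ℤ) := by omega
    have h1 : |p.1| ≤ (m:ℤ) := hmax' ▸ le_max_left _ _
    have h2 : |p.2| ≤ (m:ℤ) := hmax' ▸ le_max_right _ _
    have hor : |p.1| = (m:ℤ) ∨ |p.2| = (m:ℤ) := by
      rcases max_choice |p.1| |p.2| with h | h
      · exact Or.inl (h.symm.trans hmax')
      · exact Or.inr (h.symm.trans hmax')
    rw [Finset.mem_sdiff]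
    constructor
    · rw [Finset.mem_product, Finset.mem_Icc, Finset.mem_Icc]
      exact ⟨abs_le.1 h1, abs_le.1 h2⟩
    · intro hmem
      rw [Finset.mem_product, Finset.mem_Icc, Finset.mem_Icc] at hmem
      have hb1 : |p.1| ≤ (m:ℤ) - 1 := abs_le.2 ⟨by omega, by omega⟩
      have hb2 : |p.2| ≤ (m:ℤ) - 1 := abs_le.2 ⟨by omega, by omega⟩
      rcases hor with h | h <;> omega
  have hsmall : (Finset.Icc (-(m:ℤ)+1) ((m:ℤ)-1) ×ˢ Finset.Icc (-(m:ℤ)+1) ((m:ℤ)-1)) ⊆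
      (Finset.Icc (-(m:ℤ)) m ×ˢ Finset.Icc (-(m:ℤ)) m) :=
    Finset.product_subset_product (Finset.Icc_subset_Icc (by omega) (by omega))
      (Finset.Icc_subset_Icc (by omega) (by omega))
  have hcard := Finset.card_le_card hsub
  rw [Finset.card_sdiff_of_subset hsmall, Finset.card_product, Finset.card_product,
    Int.card_Icc, Int.card_Icc] at hcard
  have e1 : ((m:ℤ) + 1 - -(m:ℤ)).toNat = 2*m+1 := by omega
  have e2 : ((m:ℤ) - 1 + 1 - (-(m:ℤ)+1)).toNat = 2*m-1 := by omega
  rw [e1, e2] at hcard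
  refine hcard.trans ?_
  obtain ⟨t, rfl⟩ : ∃ t, m = t + 1 := ⟨m - 1, by omega⟩
  have h3 : 2*(t+1) - 1 = 2*t+1 := by omega
  rw [h3]
  exact tsub_le_iff_right.2 (le_of_eq (by ring))

/-- `Δ_n² ∑_{(j,k)} sup_{x ∈ X_{j,k}} ‖x‖^{−α}`, the sum running over the pairs `(j,k)`
with `(2πj/n, 2πk/n) ∈ [−π,π)² \ {0}`, where `X_{j,k} = [2πj/n − π/n, 2πj/n + π/n] ×
[2πk/n − π/n, 2πk/n + π/n]`. -/
def radialSum (α : ℝ) (n : ℕ) : ℝ :=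
  (2 * π / n) ^ 2 *
    ∑' j : ℤ, ∑' k : ℤ,
      if -π ≤ 2 * π * j / n ∧ 2 * π * j / n < π ∧
          -π ≤ 2 * π * k / n ∧ 2 * π * k / n < π ∧ (j, k) ≠ (0, 0)
      then
        sSup ((fun p : ℝ × ℝ => Real.sqrt (p.1 ^ 2 + p.2 ^ 2) ^ (-α)) ''
          (Set.Icc (2 * π * j / n - π / n) (2 * π * j / n + π / n) ×ˢ
            Set.Icc (2 * π * k / n - π / n) (2 * π * k / n + π / n)))
      else 0

lemma cond_j_bound (n : ℕ) (hn : 1 ≤ n) (j : ℤ) (h1 : -π ≤ 2 * π * j / n)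
    (h2 : 2 * π * j / n < π) : j ∈ Finset.Icc (-(n:ℤ)) n := by
  have hn0 : (0:ℝ) < n := by exact_mod_cast hn
  have hA : -π * n ≤ 2*π*(j:ℝ) := (le_div_iff₀ hn0).1 h1
  have hB : 2*π*(j:ℝ) < π * n := (div_lt_iff₀ hn0).1 h2
  have hA' : -(n:ℝ) ≤ (j:ℝ) := by nlinarith [pi_pos]
  have hB' : (j:ℝ) < (n:ℝ) := by nlinarith [pi_pos]
  rw [Finset.mem_Icc]
  constructor
  · exact_mod_cast hA'
  · exact_mod_cast hB'.le

lemma radialSum_nonneg (α : ℝ) (n : ℕ) : 0 ≤ radialSum α n := by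
  unfold radialSum
  apply mul_nonneg (by positivity)
  apply tsum_nonneg
  intro j
  apply tsum_nonneg
  intro k
  split
  · apply Real.sSup_nonneg
    rintro y ⟨p, _, rfl⟩
    positivity
  · exact le_refl 0

lemma radialSum_eq_finsum (α : ℝ) (n : ℕ) (hn : 1 ≤ n) :
    radialSum α n = (2 * π / n) ^ 2 *
      ∑ j ∈ Finset.Icc (-(n:ℤ)) n, ∑ k ∈ Finset.Icc (-(n:ℤ)) n,
        (if -π ≤ 2 * π * j / n ∧ 2 * π * j / n < π ∧
            -π ≤ 2 * π * k / n ∧ 2 * π * k / n < π ∧ (j, k) ≠ (0, 0)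
        then
          sSup ((fun p : ℝ × ℝ => Real.sqrt (p.1 ^ 2 + p.2 ^ 2) ^ (-α)) ''
            (Set.Icc (2 * π * j / n - π / n) (2 * π * j / n + π / n) ×ˢ
              Set.Icc (2 * π * k / n - π / n) (2 * π * k / n + π / n)))
        else 0) := by
  unfold radialSum
  congr 1
  rw [tsum_eq_sum (s := Finset.Icc (-(n:ℤ)) n)
    (fun j hj => (tsum_eq_sum (s := (∅ : Finset ℤ))
      (fun k _ => if_neg fun hc => hj (cond_j_bound n hn j hc.1 hc.2.1))).trans
        (by simp))]
  exact Finset.sum_congr rfl fun j _ =>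
    tsum_eq_sum fun k hk => if_neg fun hc => hk (cond_j_bound n hn k hc.2.2.1 hc.2.2.2.1)

lemma radialSum_le (α : ℝ) (n : ℕ) (hn : 1 ≤ n) :
    radialSum α n ≤ 32 * π^2 * (π ^ (-α) + (6*π) ^ (-α)) * (n:ℝ) ^ (α-2) *
      ∑ m ∈ Finset.Icc 1 n, (m:ℝ) ^ (1-α) := by
  have hn0 : (0:ℝ) < n := by exact_mod_cast hn
  have hK0 : (0:ℝ) ≤ π ^ (-α) + (6*π) ^ (-α) := by positivity
  rw [radialSum_eq_finsum α n hn]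
  set G : ℤ × ℤ → ℝ :=
    fun p => (π ^ (-α) + (6*π) ^ (-α)) * (((max |p.1| |p.2| : ℤ) : ℝ) / n) ^ (-α) with hG
  set h : ℤ → ℤ → ℝ := fun j k => if (j, k) = ((0:ℤ), (0:ℤ)) then 0 else G (j, k) with hh
  have hG0 : ∀ p : ℤ × ℤ, 0 ≤ G p := by
    intro p; rw [hG]; positivity
  have hh0 : ∀ j k : ℤ, 0 ≤ h j k := by
    intro j k; rw [hh]; dsimp only; split
    · exact le_refl 0
    · exact hG0 _
  have step1 : (∑ j ∈ Finset.Icc (-(n:ℤ)) n, ∑ k ∈ Finset.Icc (-(n:ℤ)) n,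
      (if -π ≤ 2 * π * j / n ∧ 2 * π * j / n < π ∧
          -π ≤ 2 * π * k / n ∧ 2 * π * k / n < π ∧ (j, k) ≠ (0, 0)
      then
        sSup ((fun p : ℝ × ℝ => Real.sqrt (p.1 ^ 2 + p.2 ^ 2) ^ (-α)) ''
          (Set.Icc (2 * π * j / n - π / n) (2 * π * j / n + π / n) ×ˢ
            Set.Icc (2 * π * k / n - π / n) (2 * π * k / n + π / n)))
      else 0)) ≤ ∑ j ∈ Finset.Icc (-(n:ℤ)) n, ∑ k ∈ Finset.Icc (-(n:ℤ)) n, h j k := by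
    refine Finset.sum_le_sum fun j _ => Finset.sum_le_sum fun k _ => ?_
    by_cases hc : -π ≤ 2 * π * j / n ∧ 2 * π * j / n < π ∧
        -π ≤ 2 * π * k / n ∧ 2 * π * k / n < π ∧ (j, k) ≠ (0, 0)
    · rw [if_pos hc, hh]
      dsimp only
      rw [if_neg hc.2.2.2.2]
      exact sup_bound α n hn j k hc.2.2.2.2
    · rw [if_neg hc]
      exact hh0 j k
  set S : Finset (ℤ × ℤ) := Finset.Icc (-(n:ℤ)) n ×ˢ Finset.Icc (-(n:ℤ)) n with hS
  have step2 : (∑ j ∈ Finset.Icc (-(n:ℤ)) n, ∑ k ∈ Finset.Icc (-(n:ℤ)) n, h j k)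
      = ∑ p ∈ S, h p.1 p.2 := by rw [Finset.sum_product']
  have hzero : h (( (0:ℤ), (0:ℤ) ) : ℤ × ℤ).1 ((0:ℤ),(0:ℤ)).2 = 0 := by
    rw [hh]; simp
  have step3 : ∑ p ∈ S, h p.1 p.2 = ∑ p ∈ S.erase ((0:ℤ),(0:ℤ)), h p.1 p.2 :=
    (Finset.sum_erase S hzero).symm
  have step4 : ∑ p ∈ S.erase ((0:ℤ),(0:ℤ)), h p.1 p.2
      = ∑ p ∈ S.erase ((0:ℤ),(0:ℤ)), G p := by
    refine Finset.sum_congr rfl fun p hp => ?_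
    rw [hh]
    dsimp only
    rw [if_neg (by simpa using Finset.ne_of_mem_erase hp)]
  -- fiberwise grouping
  set g : ℤ × ℤ → ℕ := fun p => (max |p.1| |p.2|).toNat with hg
  have hmaps : ∀ p ∈ S.erase ((0:ℤ),(0:ℤ)), g p ∈ Finset.Icc 1 n := by
    intro p hp
    obtain ⟨hne, hpS⟩ := Finset.mem_erase.1 hp
    rw [hS, Finset.mem_product, Finset.mem_Icc, Finset.mem_Icc] at hpS
    have h1 : p.1 ≠ 0 ∨ p.2 ≠ 0 := by
      by_contra hcon; push_neg at hcon
      exact hne (Prod.ext hcon.1 hcon.2)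
    have habs1 : |p.1| ≤ (n:ℤ) := abs_le.2 hpS.1
    have habs2 : |p.2| ≤ (n:ℤ) := abs_le.2 hpS.2
    have hge : 1 ≤ max |p.1| |p.2| := by
      rcases h1 with h | h
      · exact le_max_of_le_left (Int.one_le_abs h)
      · exact le_max_of_le_right (Int.one_le_abs h)
    have hle : max |p.1| |p.2| ≤ (n:ℤ) := max_le habs1 habs2
    rw [Finset.mem_Icc, hg]
    dsimp only
    omega
  have step5 : ∑ p ∈ S.erase ((0:ℤ),(0:ℤ)), G p
      = ∑ m ∈ Finset.Icc 1 n,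
          ∑ p ∈ (S.erase ((0:ℤ),(0:ℤ))).filter (fun p => g p = m), G p :=
    (Finset.sum_fiberwise_of_maps_to hmaps G).symm
  have step6 : ∑ m ∈ Finset.Icc 1 n,
        ∑ p ∈ (S.erase ((0:ℤ),(0:ℤ))).filter (fun p => g p = m), G p
      ≤ ∑ m ∈ Finset.Icc 1 n,
          (8*m : ℕ) * ((π ^ (-α) + (6*π) ^ (-α)) * ((m:ℝ)/n) ^ (-α)) := by
    refine Finset.sum_le_sum fun m hm => ?_
    have hm1 : 1 ≤ m := (Finset.mem_Icc.1 hm).1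
    have hcongr : ∀ p ∈ (S.erase ((0:ℤ),(0:ℤ))).filter (fun p => g p = m),
        G p = (π ^ (-α) + (6*π) ^ (-α)) * ((m:ℝ)/n) ^ (-α) := by
      intro p hp
      have hgp : g p = m := (Finset.mem_filter.1 hp).2
      have h0 : (0:ℤ) ≤ max |p.1| |p.2| := le_trans (abs_nonneg _) (le_max_left _ _)
      have : max |p.1| |p.2| = (m:ℤ) := by rw [hg] at hgp; dsimp only at hgp; omega
      rw [hG]
      dsimp only
      rw [this]
      norm_num
    rw [Finset.sum_congr rfl hcongr, Finset.sum_const, nsmul_eq_mul]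
    apply mul_le_mul_of_nonneg_right _ (by positivity)
    have hcard : ((S.erase ((0:ℤ),(0:ℤ))).filter (fun p => g p = m)).card ≤ 8 * m :=
      fiber_card_le m hm1 _ (fun p hp => (Finset.mem_filter.1 hp).2)
    exact_mod_cast hcard
  have step7 : ∑ m ∈ Finset.Icc 1 n,
        ((8*m : ℕ) : ℝ) * ((π ^ (-α) + (6*π) ^ (-α)) * ((m:ℝ)/n) ^ (-α))
      = ∑ m ∈ Finset.Icc 1 n,
          (32 * π^2 * (π ^ (-α) + (6*π) ^ (-α)) * (n:ℝ) ^ (α-2) * (m:ℝ) ^ (1-α))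
          / ((2 * π / n) ^ 2) := by
    refine Finset.sum_congr rfl fun m hm => ?_
    have hm1 : 1 ≤ m := (Finset.mem_Icc.1 hm).1
    have hm0 : (0:ℝ) < m := by exact_mod_cast hm1
    have e1 : ((m:ℝ)/n) ^ (-α) = (m:ℝ) ^ (-α) / (n:ℝ) ^ (-α) :=
      Real.div_rpow hm0.le hn0.le _
    have e2 : (n:ℝ) ^ (-α) = ((n:ℝ) ^ α)⁻¹ := Real.rpow_neg hn0.le α
    have e3 : (m:ℝ) ^ ((1:ℝ)-α) = m * (m:ℝ) ^ (-α) := by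
      rw [show (1:ℝ)-α = 1 + (-α) by ring, Real.rpow_add hm0, Real.rpow_one]
    have e4 : (n:ℝ) ^ (α-2) = (n:ℝ) ^ α * ((n:ℝ) ^ ((2:ℕ):ℝ))⁻¹ := by
      rw [show α-2 = α + -(((2:ℕ):ℝ)) by push_cast; ring, Real.rpow_add hn0,
        Real.rpow_neg hn0.le]
    have e5 : (n:ℝ) ^ ((2:ℕ):ℝ) = (n:ℝ) ^ (2:ℕ) := Real.rpow_natCast _ 2
    have hπ : (0:ℝ) < π := pi_pos
    have hnα : (0:ℝ) < (n:ℝ) ^ α := Real.rpow_pos_of_pos hn0 α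
    have hmα : (0:ℝ) < (m:ℝ) ^ (-α) := Real.rpow_pos_of_pos hm0 _
    rw [e1, e2, e3, e4, e5]
    push_cast
    field_simp
    ring
  -- assemble
  have hsq : (0:ℝ) < (2 * π / n) ^ 2 := by positivity
  calc (2 * π / n) ^ 2 * _ ≤ (2 * π / n) ^ 2 *
        (∑ m ∈ Finset.Icc 1 n,
          ((8*m : ℕ) : ℝ) * ((π ^ (-α) + (6*π) ^ (-α)) * ((m:ℝ)/n) ^ (-α))) := by
        apply mul_le_mul_of_nonneg_left _ hsq.le
        calc _ ≤ _ := step1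
          _ = _ := step2.trans (step3.trans (step4.trans step5))
          _ ≤ _ := step6
    _ = (2 * π / n) ^ 2 * ∑ m ∈ Finset.Icc 1 n,
          (32 * π^2 * (π ^ (-α) + (6*π) ^ (-α)) * (n:ℝ) ^ (α-2) * (m:ℝ) ^ (1-α))
          / ((2 * π / n) ^ 2) := by rw [step7]
    _ = ∑ m ∈ Finset.Icc 1 n,
          32 * π^2 * (π ^ (-α) + (6*π) ^ (-α)) * (n:ℝ) ^ (α-2) * (m:ℝ) ^ (1-α) := by
        rw [Finset.mul_sum]
        exact Finset.sum_congr rfl fun m _ => by field_simp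
    _ = 32 * π^2 * (π ^ (-α) + (6*π) ^ (-α)) * (n:ℝ) ^ (α-2) *
          ∑ m ∈ Finset.Icc 1 n, (m:ℝ) ^ (1-α) := by rw [Finset.mul_sum]

/-- as `n → ∞` the above quantity is `O(n^{α−2})` if `α > 2`, `O(log n)` if
`α = 2`, and `O(1)` if `α < 2`. -/
theorem radialSum_asymptotics (α : ℝ) :
    (2 < α → (fun n : ℕ => radialSum α n) =O[atTop] fun n : ℕ => (n : ℝ) ^ (α - 2)) ∧
    (α = 2 → (fun n : ℕ => radialSum α n) =O[atTop] fun n : ℕ => Real.log n) ∧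
    (α < 2 → (fun n : ℕ => radialSum α n) =O[atTop] fun _ : ℕ => (1 : ℝ)) := by
  have hK0 : (0:ℝ) ≤ π ^ (-α) + (6*π) ^ (-α) := by positivity
  refine ⟨?_, ?_, ?_⟩
  · -- α > 2
    intro hα
    have hsummable : Summable (fun m : ℕ => (m:ℝ) ^ (1-α)) :=
      Real.summable_nat_rpow.2 (by linarith)
    have hT0 : 0 ≤ ∑' m : ℕ, (m:ℝ) ^ (1-α) :=
      tsum_nonneg fun m => Real.rpow_nonneg (Nat.cast_nonneg m) _
    rw [Asymptotics.isBigO_iff]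
    refine ⟨32 * π^2 * (π ^ (-α) + (6*π) ^ (-α)) * ∑' m : ℕ, (m:ℝ) ^ (1-α), ?_⟩
    filter_upwards [eventually_ge_atTop 1] with n hn
    have hn0 : (0:ℝ) < n := by exact_mod_cast hn
    have h1 := radialSum_le α n hn
    have h2 : ∑ m ∈ Finset.Icc 1 n, (m:ℝ) ^ (1-α) ≤ ∑' m : ℕ, (m:ℝ) ^ (1-α) :=
      hsummable.sum_le_tsum _ (fun m _ => Real.rpow_nonneg (Nat.cast_nonneg m) _)
    have h3 : (0:ℝ) ≤ (n:ℝ) ^ (α-2) := Real.rpow_nonneg hn0.le _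
    rw [Real.norm_eq_abs, Real.norm_eq_abs, abs_of_nonneg (radialSum_nonneg α n),
      abs_of_nonneg h3]
    calc radialSum α n
        ≤ 32 * π^2 * (π ^ (-α) + (6*π) ^ (-α)) * (n:ℝ) ^ (α-2) *
            ∑ m ∈ Finset.Icc 1 n, (m:ℝ) ^ (1-α) := h1
      _ ≤ 32 * π^2 * (π ^ (-α) + (6*π) ^ (-α)) * (n:ℝ) ^ (α-2) *
            ∑' m : ℕ, (m:ℝ) ^ (1-α) := by
          apply mul_le_mul_of_nonneg_left h2 (by positivity)
      _ = 32 * π^2 * (π ^ (-α) + (6*π) ^ (-α)) * (∑' m : ℕ, (m:ℝ) ^ (1-α)) *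
            (n:ℝ) ^ (α-2) := by ring
  · -- α = 2
    intro hα
    subst hα
    rw [Asymptotics.isBigO_iff]
    refine ⟨2 * (32 * π^2 * (π ^ (-(2:ℝ)) + (6*π) ^ (-(2:ℝ)))), ?_⟩
    filter_upwards [eventually_ge_atTop 3] with n hn
    have hn1 : 1 ≤ n := by omega
    have hn0 : (0:ℝ) < n := by exact_mod_cast hn1
    have h1 := radialSum_le 2 n hn1
    rw [show (2:ℝ)-2 = 0 by norm_num, Real.rpow_zero, mul_one] at h1
    have hconv : ∑ m ∈ Finset.Icc 1 n, (m:ℝ) ^ ((1:ℝ)-2)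
        = ∑ m ∈ Finset.Icc 1 n, (m:ℝ)⁻¹ := by
      refine Finset.sum_congr rfl fun m _ => ?_
      rw [show (1:ℝ)-2 = -1 by norm_num, Real.rpow_neg_one]
    rw [hconv] at h1
    have h2 := harmonic_le n
    have hlog : 1 ≤ Real.log n := by
      rw [← Real.log_exp 1]
      apply Real.log_le_log (Real.exp_pos 1)
      calc Real.exp 1 ≤ 2.7182818286 := le_of_lt Real.exp_one_lt_d9
        _ ≤ 3 := by norm_num
        _ ≤ (n:ℝ) := by exact_mod_cast hn
    have hD0 : (0:ℝ) ≤ 32 * π^2 * (π ^ (-(2:ℝ)) + (6*π) ^ (-(2:ℝ))) := by positivity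
    rw [Real.norm_eq_abs, Real.norm_eq_abs, abs_of_nonneg (radialSum_nonneg 2 n),
      abs_of_nonneg (by linarith : (0:ℝ) ≤ Real.log n)]
    calc radialSum 2 n
        ≤ 32 * π^2 * (π ^ (-(2:ℝ)) + (6*π) ^ (-(2:ℝ))) *
            ∑ m ∈ Finset.Icc 1 n, (m:ℝ)⁻¹ := h1
      _ ≤ 32 * π^2 * (π ^ (-(2:ℝ)) + (6*π) ^ (-(2:ℝ))) * (1 + Real.log n) :=
          mul_le_mul_of_nonneg_left h2 hD0
      _ ≤ 32 * π^2 * (π ^ (-(2:ℝ)) + (6*π) ^ (-(2:ℝ))) * (2 * Real.log n) :=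
          mul_le_mul_of_nonneg_left (by linarith) hD0
      _ = 2 * (32 * π^2 * (π ^ (-(2:ℝ)) + (6*π) ^ (-(2:ℝ)))) * Real.log n := by ring
  · -- α < 2
    intro hα
    have hβ : (0:ℝ) < 2 - α := by linarith
    rw [Asymptotics.isBigO_iff]
    refine ⟨32 * π^2 * (π ^ (-α) + (6*π) ^ (-α)) * (1 + (2-α)⁻¹), ?_⟩
    filter_upwards [eventually_ge_atTop 1] with n hn
    have hn0 : (0:ℝ) < n := by exact_mod_cast hn
    have h1 := radialSum_le α n hn
    have h2 : ∑ m ∈ Finset.Icc 1 n, (m:ℝ) ^ (1-α) ≤ (1 + (2-α)⁻¹) * (n:ℝ) ^ (2-α) := by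
      have := sum_rpow_le_pow hβ n
      rwa [show (2-α)-1 = 1-α by ring] at this
    have h3 : (n:ℝ) ^ (α-2) * (n:ℝ) ^ (2-α) = 1 := by
      rw [← Real.rpow_add hn0, show α-2+(2-α) = 0 by ring, Real.rpow_zero]
    rw [Real.norm_eq_abs, Real.norm_eq_abs, abs_of_nonneg (radialSum_nonneg α n),
      abs_one, mul_one]
    calc radialSum α n
        ≤ 32 * π^2 * (π ^ (-α) + (6*π) ^ (-α)) * (n:ℝ) ^ (α-2) *
            ∑ m ∈ Finset.Icc 1 n, (m:ℝ) ^ (1-α) := h1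
      _ ≤ 32 * π^2 * (π ^ (-α) + (6*π) ^ (-α)) * (n:ℝ) ^ (α-2) *
            ((1 + (2-α)⁻¹) * (n:ℝ) ^ (2-α)) := by
          apply mul_le_mul_of_nonneg_left h2 (by positivity)
      _ = 32 * π^2 * (π ^ (-α) + (6*π) ^ (-α)) * (1 + (2-α)⁻¹) *
            ((n:ℝ) ^ (α-2) * (n:ℝ) ^ (2-α)) := by ring
      _ = 32 * π^2 * (π ^ (-α) + (6*π) ^ (-α)) * (1 + (2-α)⁻¹) := by
          rw [h3, mul_one]

end
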